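/- Let n ≥ 3 and let S_n be the star graph on vertices {0,1,...,n−1} with center 0. Then the monoid of partial weak endomorphisms of S_n has cardinality |PwEnd(S_n)| = 2·(n+1)^{n−1} + (n−1)·3^{n−1}. -/

import Mathlib

variable {V : Type*}

/-- Partial transformations of `V`. -/
abbrev PTrans (V : Type*) := V → Option V

/-- Monoid of partial transformations under (left-to-right) composition. -/
instance : Monoid (PTrans V) where
  mul f g := fun v => (f v).bind g
  one := fun v => some v
  mul_assoc f g h := by
    funext v
    show ((f v).bind g).bind h = (f v).bind (fun x => (g x).bind h)
    cases f v <;> simp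
  one_mul f := by funext v; rfl
  mul_one f := by
    funext v
    show (f v).bind (fun x => some x) = f v
    cases f v <;> simp

/-- Domain of a partial transformation. -/
def pdom (α : PTrans V) : Set V := {u | α u ≠ none}

/-- Image of a partial transformation. -/
def pim (α : PTrans V) : Set V := {v | ∃ u, α u = some v}

def IsPEnd (G : SimpleGraph V) (α : PTrans V) : Prop :=
  ∀ u v u' v', α u = some u' → α v = some v' → G.Adj u v → G.Adj u' v'

def IsPwEnd (G : SimpleGraph V) (α : PTrans V) : Prop :=
  ∀ u v u' v', α u = some u' → α v = some v' → G.Adj u v → u' ≠ v' → G.Adj u' v'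

def IsPsEnd (G : SimpleGraph V) (α : PTrans V) : Prop :=
  ∀ u v u' v', α u = some u' → α v = some v' → (G.Adj u v ↔ G.Adj u' v')

def IsPswEnd (G : SimpleGraph V) (α : PTrans V) : Prop :=
  ∀ u v u' v', α u = some u' → α v = some v' → ((G.Adj u v ∧ u' ≠ v') ↔ G.Adj u' v')

/-- Injectivity of a partial transformation. -/
def PInjective (α : PTrans V) : Prop :=
  ∀ u v w, α u = some w → α v = some w → u = v

open Classical in
/-- The inverse of a partial (injective) transformation. -/
noncomputable def pinv (α : PTrans V) : PTrans V :=
  fun v => if h : ∃ u, α u = some v then some h.choose else none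

/-- Partial automorphism: injective, and both it and its inverse are
partial endomorphisms. -/
def IsPAut (G : SimpleGraph V) (α : PTrans V) : Prop :=
  PInjective α ∧ IsPEnd G α ∧ IsPEnd G (pinv α)

/-- The star graph on vertices `{0,1,...,n-1}` with center `0`. -/
def starGraph (n : ℕ) : SimpleGraph (Fin n) :=
  SimpleGraph.fromRel (fun u _ => (u : ℕ) = 0)

section Aux
variable {m : ℕ}

lemma star_adj {u v : Fin (m+1)} :
    (starGraph (m+1)).Adj u v ↔ u ≠ v ∧ (u = 0 ∨ v = 0) := by
  rw [starGraph, SimpleGraph.fromRel_adj]; simp only [Ne, Fin.ext_iff, Fin.val_zero, or_self]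

lemma pwend_iff (α : PTrans (Fin (m+1))) :
    IsPwEnd (starGraph (m+1)) α ↔
      ∀ a : Fin (m+1), α 0 = some a → a ≠ 0 →
        ∀ v : Fin (m+1), v ≠ 0 → α v = none ∨ α v = some 0 ∨ α v = some a := by
  constructor
  · intro h a h0 ha v hv
    cases hb : α v with
    | none => exact Or.inl rfl
    | some b =>
      by_cases hb0 : b = 0
      · subst hb0; exact Or.inr (Or.inl rfl)
      by_cases hba : b = a
      · subst hba; exact Or.inr (Or.inr rfl)
      exfalso
      have := h 0 v a b h0 hb (star_adj.mpr ⟨(Ne.symm hv), Or.inl rfl⟩)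
        (fun hh => hba hh.symm)
      rw [star_adj] at this
      rcases this.2 with h1 | h1
      · exact ha h1
      · exact hb0 h1
  · intro h u v u' v' hu hv hadj hne
    rw [star_adj] at hadj ⊢
    refine ⟨hne, ?_⟩
    rcases hadj with ⟨huv, h0 | h0⟩
    · subst h0
      by_cases hu'0 : u' = 0
      · exact Or.inl hu'0
      · rcases h u' hu hu'0 v (Ne.symm huv) with hh | hh | hh
        · rw [hv] at hh; cases hh
        · rw [hv] at hh; exact Or.inr (Option.some_injective _ hh)
        · rw [hv] at hh; exact absurd (Option.some_injective _ hh) (Ne.symm hne)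
    · subst h0
      by_cases hv'0 : v' = 0
      · exact Or.inr hv'0
      · rcases h v' hv hv'0 u huv with hh | hh | hh
        · rw [hu] at hh; cases hh
        · rw [hu] at hh; exact Or.inl (Option.some_injective _ hh)
        · rw [hu] at hh; exact absurd (Option.some_injective _ hh) hne

end Aux

section Count
variable {m : ℕ}

/-- Fiber over `b ∈ {none, some 0}`: leaves are free. -/
noncomputable def fiberFree (b : Option (Fin (m+1))) (hb : b = none ∨ b = some 0) :
    {α : {α : PTrans (Fin (m+1)) // IsPwEnd (starGraph (m+1)) α} // α.1 0 = b} ≃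
      ({v : Fin (m+1) // v ≠ 0} → Option (Fin (m+1))) where
  toFun α := fun v => α.1.1 v.1
  invFun f :=
    ⟨⟨fun v => if h : v = 0 then b else f ⟨v, h⟩, by
      rw [pwend_iff]
      intro a h0 ha v hv
      rw [dif_pos rfl] at h0
      rcases hb with rfl | rfl
      · cases h0
      · exact absurd (Option.some_injective _ h0).symm ha⟩, by simp⟩
  left_inv α := by
    apply Subtype.ext; apply Subtype.ext; funext v
    dsimp only
    split
    · next h => subst h; exact α.2.symm
    · rfl
  right_inv f := by
    funext v
    dsimp only
    rw [dif_neg v.2]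

/-- Fiber over `some a` with `a ≠ 0`: each leaf has 3 choices. -/
noncomputable def fiberThree (a : Fin (m+1)) (ha : a ≠ 0) :
    {α : {α : PTrans (Fin (m+1)) // IsPwEnd (starGraph (m+1)) α} // α.1 0 = some a} ≃
      ({v : Fin (m+1) // v ≠ 0} → Fin 3) where
  toFun α := fun v => if α.1.1 v.1 = none then 0 else if α.1.1 v.1 = some 0 then 1 else 2
  invFun f :=
    ⟨⟨fun v => if h : v = 0 then some a
        else if f ⟨v, h⟩ = 0 then none else if f ⟨v, h⟩ = 1 then some 0 else some a, by
      rw [pwend_iff]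
      intro a' h0 ha' v hv
      rw [dif_pos rfl] at h0
      have haa : a' = a := Option.some_injective _ h0.symm
      subst haa
      rw [dif_neg hv]
      split
      · exact Or.inl rfl
      split
      · exact Or.inr (Or.inl rfl)
      · exact Or.inr (Or.inr rfl)⟩, by simp⟩
  left_inv α := by
    apply Subtype.ext; apply Subtype.ext; funext v
    dsimp only
    split
    · next h => subst h; exact α.2.symm
    · next h =>
      rcases (pwend_iff α.1.1).mp α.1.2 a α.2 ha v h with hh | hh | hh <;>
        simp [hh, ha]
  right_inv f := by
    funext v
    dsimp only
    simp only [dif_neg v.2]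
    have : f ⟨v.1, v.2⟩ = f v := by rw [Subtype.eta]
    rw [this]
    generalize f v = x
    fin_cases x <;> simp [ha]

end Count

theorem stmt7 (n : ℕ) (hn : 3 ≤ n) :
    Nat.card {α : PTrans (Fin n) // IsPwEnd (starGraph n) α} =
      2 * (n + 1) ^ (n - 1) + (n - 1) * 3 ^ (n - 1) := by
  obtain ⟨m, rfl⟩ : ∃ m, n = m + 1 := ⟨n - 1, by omega⟩
  classical
  have cardL : Fintype.card {v : Fin (m+1) // v ≠ 0} = m := by
    simp [Fintype.card_subtype_compl, Fintype.card_subtype_eq]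
  rw [Nat.card_congr (Equiv.sigmaFiberEquiv
      (fun α : {α : PTrans (Fin (m+1)) // IsPwEnd (starGraph (m+1)) α} => α.1 0)).symm,
    Nat.card_eq_fintype_card, Fintype.card_sigma]
  have hfree : ∀ (b : Option (Fin (m+1))), b = none ∨ b = some 0 →
      Fintype.card {α : {α : PTrans (Fin (m+1)) // IsPwEnd (starGraph (m+1)) α} // α.1 0 = b}
        = (m+2) ^ m := by
    intro b hb
    rw [Fintype.card_congr (fiberFree b hb), Fintype.card_fun, cardL]
    simp
  have hthree : ∀ (a : Fin (m+1)), a ≠ 0 →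
      Fintype.card {α : {α : PTrans (Fin (m+1)) // IsPwEnd (starGraph (m+1)) α} // α.1 0 = some a}
        = 3 ^ m := by
    intro a ha
    rw [Fintype.card_congr (fiberThree a ha), Fintype.card_fun, cardL]
    simp
  rw [show (Finset.univ : Finset (Option (Fin (m+1)))) = Finset.insertNone Finset.univ from
      univ_option _, Finset.sum_insertNone]
  rw [hfree none (Or.inl rfl), Fin.sum_univ_succ, hfree (some 0) (Or.inr rfl)]
  have : ∀ i : Fin m, Fintype.card
      {α : {α : PTrans (Fin (m+1)) // IsPwEnd (starGraph (m+1)) α} // α.1 0 = some i.succ}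
        = 3 ^ m := fun i => hthree _ (Fin.succ_ne_zero i)
  rw [Finset.sum_congr rfl (fun i _ => this i), Finset.sum_const, Finset.card_univ,
    Fintype.card_fin]
  simp only [Nat.add_sub_cancel, smul_eq_mul]
  ring_nf
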